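/- (Main theorem, part 2) For each n ∈ ℕ let A_n be a symmetric (0,2)-tensor field on P_n, and assume that for every n ∈ ℕ and each scalar patched Markov embedding G_n : P_n → P_{n+1}, the pullback of A_{n+1} by G_n equals A_n. If A_1 and A_2 satisfy condition (C2), then there exists μ ≥ 0, independent of n, such that A_n = μ A_n^s for all n ∈ ℕ. -/

import Mathlib

open Finset

noncomputable section

/-- `Psim n` is the space `P_n` of positive probability measures on
`Ω_{n+1} = {1,…,n+1}`, viewed as a subset of `ℝ^{n+1}`. -/
def Psim (n : ℕ) : Set (Fin (n + 1) → ℝ) :=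
  {p | (∀ i, p i ∈ Set.Ioo (0 : ℝ) 1) ∧ ∑ i, p i = 1}

/-- The tangent space of `P_n` (at any point): vectors in `ℝ^{n+1}` whose
coordinates sum to zero. -/
def Tang (n : ℕ) : Set (Fin (n + 1) → ℝ) :=
  {X | ∑ i, X i = 0}

/-- `B` is a symmetric bilinear form on `ℝ^{n+1}` (the value of a symmetric
`(0,2)`-tensor field at a point). -/
def IsSymmBilin {n : ℕ} (B : (Fin (n + 1) → ℝ) → (Fin (n + 1) → ℝ) → ℝ) : Prop :=
  (∀ X Y, B X Y = B Y X) ∧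
  (∀ (c : ℝ) (X X' Y : Fin (n + 1) → ℝ), B (c • X + X') Y = c * B X Y + B X' Y)

/-- `A` is a family of symmetric `(0,2)`-tensor fields `A_n` on `P_n`
(indices `n ≥ 1`, matching the paper's `ℕ = {1,2,…}`). -/
def SymmTF (A : (n : ℕ) → (Fin (n + 1) → ℝ) → (Fin (n + 1) → ℝ) → (Fin (n + 1) → ℝ) → ℝ) :
    Prop :=
  ∀ n : ℕ, 0 < n → ∀ p ∈ Psim n, IsSymmBilin (A n p)

/-- The scalar patched Markov embedding `G_n^{α,σ} : P_n → P_{n+1}`,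
`G_n^{α,σ}(p) = α ∑_{i ∈ Ω_{n+1}} p(i) δ_{σ(i)} + (1-α) δ_{σ(n+2)}`. -/
def sPatch (n : ℕ) (α : ℝ) (σ : Equiv.Perm (Fin (n + 2))) (p : Fin (n + 1) → ℝ) :
    Fin (n + 2) → ℝ := fun I =>
  α * ∑ i : Fin (n + 1), p i * (if σ i.castSucc = I then 1 else 0) +
    (1 - α) * (if σ (Fin.last (n + 1)) = I then 1 else 0)

/-- The differential of `G_n^{α,σ}`: `dG(X) = α ∑_i X^i δ_{σ(i)}`. -/
def sPatchD (n : ℕ) (α : ℝ) (σ : Equiv.Perm (Fin (n + 2))) (X : Fin (n + 1) → ℝ) :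
    Fin (n + 2) → ℝ := fun I =>
  α * ∑ i : Fin (n + 1), X i * (if σ i.castSucc = I then 1 else 0)

/-- A general patched Markov embedding `G_n : P_n → P_{n+1}` with weights `a_i`:
`G_n(p) = ∑_i p(i) (a_i δ_{σ(i)} + (1-a_i) δ_{σ(n+2)})`. -/
def patch (n : ℕ) (a : Fin (n + 1) → ℝ) (σ : Equiv.Perm (Fin (n + 2)))
    (p : Fin (n + 1) → ℝ) : Fin (n + 2) → ℝ := fun I =>
  ∑ i : Fin (n + 1), p i * (a i * (if σ i.castSucc = I then 1 else 0) +
    (1 - a i) * (if σ (Fin.last (n + 1)) = I then 1 else 0))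

/-- The differential of a patched Markov embedding. -/
def patchD (n : ℕ) (a : Fin (n + 1) → ℝ) (σ : Equiv.Perm (Fin (n + 2)))
    (X : Fin (n + 1) → ℝ) : Fin (n + 2) → ℝ := fun I =>
  ∑ i : Fin (n + 1), X i * (a i * (if σ i.castSucc = I then 1 else 0) +
    (1 - a i) * (if σ (Fin.last (n + 1)) = I then 1 else 0))

/-- Invariance of the family `{A_n}` under scalar patched Markov embeddings:
the pullback of `A_{n+1}` by each `G_n^{α,σ}` equals `A_n`. -/
def InvariantSP
    (A : (n : ℕ) → (Fin (n + 1) → ℝ) → (Fin (n + 1) → ℝ) → (Fin (n + 1) → ℝ) → ℝ) : Prop :=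
  ∀ n : ℕ, 0 < n → ∀ α ∈ Set.Ioo (0 : ℝ) 1, ∀ σ : Equiv.Perm (Fin (n + 2)),
    ∀ p ∈ Psim n, ∀ X ∈ Tang n, ∀ Y ∈ Tang n,
      A (n + 1) (sPatch n α σ p) (sPatchD n α σ X) (sPatchD n α σ Y) = A n p X Y

/-- The vector field `Z_i^n` on `P_n`, with (constant) coordinates
`e_i - (1/(n+1)) ∑_j e_j`. -/
def Zvec (n : ℕ) (i : Fin (n + 1)) : Fin (n + 1) → ℝ :=
  fun k => (if k = i then 1 else 0) - 1 / (n + 1)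

/-- The uniform probability measure `b_n ∈ P_n`. -/
def bunif (n : ℕ) : Fin (n + 1) → ℝ := fun _ => 1 / (n + 1)

/-- The point `p_u ∈ P_1`: `p_u(1) = u`, `p_u(2) = 1 - u`. -/
def pu (u : ℝ) : Fin 2 → ℝ := ![u, 1 - u]

/-- The tensor field `A_n^d(X,Y)_p = ∑_i X^i Y^i / p(i)²`. -/
def Ad (n : ℕ) (p X Y : Fin (n + 1) → ℝ) : ℝ := ∑ i, X i * Y i / (p i) ^ 2

/-- The tensor field `A_n^s(X,Y)_p = (∑_i X^i/p(i)) (∑_j Y^j/p(j))`. -/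
def As (n : ℕ) (p X Y : Fin (n + 1) → ℝ) : ℝ := (∑ i, X i / p i) * (∑ j, Y j / p j)

/-- The Fisher metric `g_n^F(X,Y)_p = ∑_i X^i Y^i / p(i)`. -/
def Fish (n : ℕ) (p X Y : Fin (n + 1) → ℝ) : ℝ := ∑ i, X i * Y i / p i

/-- The point `ψ_u^σ(α) = G_1^{α,σ}(p_u) ∈ P_2` (the indices `1,2,3` of `Ω_3`
are `0,1,2 : Fin 3`). -/
def psiPt (α u : ℝ) (σ : Equiv.Perm (Fin 3)) : Fin 3 → ℝ := sPatch 1 α σ (pu u)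

/-- `E^k ⊂ TP_2`: the line spanned by `Z_i^2 - Z_j^2 = e_i - e_j` where
`{i,j,k} = {0,1,2}`; equivalently, the sum-zero vectors vanishing at `k`. -/
def Esub (k : Fin 3) : Set (Fin 3 → ℝ) := {W | (∑ i, W i = 0) ∧ W k = 0}

/-- `u_α^{ij}` (formed with `σ = id`). -/
def uRatio (α u : ℝ) (i j : Fin 3) : ℝ :=
  psiPt α u (Equiv.refl (Fin 3)) i /
    (psiPt α u (Equiv.refl (Fin 3)) i + psiPt α u (Equiv.refl (Fin 3)) j)

/-- The image `dH^{ij}_q(Z_1^1) = ((q(i)+q(j))/2) (Z_i^2 - Z_j^2)` of `Z_1^1`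
under the differential of `H_q^{ij} : P_1 → P_2`. -/
def dHvec (q : Fin 3 → ℝ) (i j : Fin 3) : Fin 3 → ℝ :=
  ((q i + q j) / 2) • (Zvec 2 i - Zvec 2 j)

/-- Condition (C1) for `A_2`. -/
def CondC1 (A2 : (Fin 3 → ℝ) → (Fin 3 → ℝ) → (Fin 3 → ℝ) → ℝ) : Prop :=
  ∃ r : ℝ → ℝ, (∀ t : ℝ, 0 < t → 0 < r t) ∧ (∀ t : ℝ, 0 < t → r t * r (1 / t) = 1) ∧
    ∀ α ∈ Set.Ioo (0 : ℝ) 1, ∀ u ∈ Set.Ioo (0 : ℝ) 1, ∀ σ : Equiv.Perm (Fin 3),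
      ∀ W1 W2 W3 : Fin 3 → ℝ, W1 ∈ Esub (σ 0) → W2 ∈ Esub (σ 1) → W3 ∈ Esub (σ 2) →
        W3 = W1 + W2 →
        A2 (psiPt α u σ) W3 W1 = r (u / (1 - u)) * A2 (psiPt α u σ) W3 W2

/-- Condition (C2) for `A_1` and `A_2`: `A_1` is positive semidefinite and
degenerate at `b_1`, and the parallelism identity holds. -/
def CondC2 (A1 : (Fin 2 → ℝ) → (Fin 2 → ℝ) → (Fin 2 → ℝ) → ℝ)
    (A2 : (Fin 3 → ℝ) → (Fin 3 → ℝ) → (Fin 3 → ℝ) → ℝ) : Prop :=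
  (∀ p ∈ Psim 1, ∀ X ∈ Tang 1, 0 ≤ A1 p X X) ∧
  (∃ X ∈ Tang 1, X ≠ 0 ∧ ∀ Y ∈ Tang 1, A1 (bunif 1) X Y = 0) ∧
  (∀ α ∈ Set.Ioo (0 : ℝ) 1, ∀ u ∈ Set.Ioo (0 : ℝ) 1, ∀ σ : Equiv.Perm (Fin 3),
    ∀ i j k l : Fin 3, i ≠ j → k ≠ l →
      A2 (psiPt α u σ) (dHvec (psiPt α u σ) (σ i) (σ j)) (dHvec (psiPt α u σ) (σ k) (σ l)) =
        (Real.sign (2 * uRatio α u i j - 1) *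
            Real.sqrt (A1 (pu (uRatio α u i j)) (Zvec 1 0) (Zvec 1 0))) *
        (Real.sign (2 * uRatio α u k l - 1) *
            Real.sqrt (A1 (pu (uRatio α u k l)) (Zvec 1 0) (Zvec 1 0))))

/-- `H : P_m → P_n` (together with its linear differential `dH`) is a
composition of scalar patched Markov embeddings. -/
inductive IsSPMComp :
    (m n : ℕ) → ((Fin (m + 1) → ℝ) → (Fin (n + 1) → ℝ)) →
      ((Fin (m + 1) → ℝ) → (Fin (n + 1) → ℝ)) → Prop
  | refl (m : ℕ) : IsSPMComp m m id id
  | step {m n : ℕ} {H dH : (Fin (m + 1) → ℝ) → (Fin (n + 1) → ℝ)} (α : ℝ)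
      (hα : α ∈ Set.Ioo (0 : ℝ) 1) (σ : Equiv.Perm (Fin (n + 2)))
      (h : IsSPMComp m n H dH) :
      IsSPMComp m (n + 1) (fun p => sPatch n α σ (H p)) (fun X => sPatchD n α σ (dH X))

/-- `Q` is a Markov partition: each `Q i` is a probability measure on `Ω_{N+1}`
and the supports of the `Q i` are pairwise disjoint with union `Ω_{N+1}`. -/
def IsMarkovPartition {n N : ℕ} (Q : Fin (n + 1) → Fin (N + 1) → ℝ) : Prop :=
  (∀ i, (∀ I, 0 ≤ Q i I) ∧ ∑ I, Q i I = 1) ∧ (∀ I, ∃! i, Q i I ≠ 0)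

/-- The Markov embedding `F(p) = ∑_i p(i) Q_i` induced by `Q` (the same formula
gives its differential on tangent vectors). -/
def mEmb {n N : ℕ} (Q : Fin (n + 1) → Fin (N + 1) → ℝ) (p : Fin (n + 1) → ℝ) :
    Fin (N + 1) → ℝ := fun I => ∑ i, p i * Q i I

/-- `A_n^{λ,μ} = λ A_n^d + μ A_n^s`. -/
def Alm (n : ℕ) (lam mu : ℝ) (p X Y : Fin (n + 1) → ℝ) : ℝ :=
  lam * Ad n p X Y + mu * As n p X Y
section Aux

variable {n : ℕ} {B : (Fin (n + 1) → ℝ) → (Fin (n + 1) → ℝ) → ℝ}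

lemma IsSymmBilin.zero_left (hB : IsSymmBilin B) (Y : Fin (n + 1) → ℝ) : B 0 Y = 0 := by
  have h := hB.2 1 0 0 Y
  simp at h
  linarith

lemma IsSymmBilin.smul_left (hB : IsSymmBilin B) (c : ℝ) (X Y : Fin (n + 1) → ℝ) :
    B (c • X) Y = c * B X Y := by
  have h := hB.2 c X 0 Y
  simpa [hB.zero_left] using h

lemma IsSymmBilin.add_left (hB : IsSymmBilin B) (X X' Y : Fin (n + 1) → ℝ) :
    B (X + X') Y = B X Y + B X' Y := by
  have h := hB.2 1 X X' Y
  simpa using h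

lemma IsSymmBilin.zero_right (hB : IsSymmBilin B) (X : Fin (n + 1) → ℝ) : B X 0 = 0 := by
  rw [hB.1]; exact hB.zero_left X

lemma IsSymmBilin.smul_right (hB : IsSymmBilin B) (c : ℝ) (X Y : Fin (n + 1) → ℝ) :
    B X (c • Y) = c * B X Y := by
  rw [hB.1, hB.smul_left, hB.1]

lemma IsSymmBilin.add_right (hB : IsSymmBilin B) (X Y Y' : Fin (n + 1) → ℝ) :
    B X (Y + Y') = B X Y + B X Y' := by
  rw [hB.1, hB.add_left, hB.1 Y X, hB.1 Y' X]

lemma IsSymmBilin.sum_left (hB : IsSymmBilin B) {ι : Type*} (s : Finset ι)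
    (g : ι → (Fin (n + 1) → ℝ)) (Y : Fin (n + 1) → ℝ) :
    B (∑ i ∈ s, g i) Y = ∑ i ∈ s, B (g i) Y := by
  classical
  induction s using Finset.induction_on with
  | empty => simpa using hB.zero_left Y
  | insert _ _ hx ih =>
      rw [Finset.sum_insert hx, Finset.sum_insert hx, hB.add_left, ih]

lemma IsSymmBilin.sum_right (hB : IsSymmBilin B) {ι : Type*} (s : Finset ι)
    (g : ι → (Fin (n + 1) → ℝ)) (X : Fin (n + 1) → ℝ) :
    B X (∑ i ∈ s, g i) = ∑ i ∈ s, B X (g i) := by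
  rw [hB.1, hB.sum_left]
  exact Finset.sum_congr rfl fun i _ => hB.1 _ _

/-- `e_i - e_j`. -/
def Evec (n : ℕ) (i j : Fin (n + 1)) : Fin (n + 1) → ℝ :=
  fun k => (if k = i then 1 else 0) - if k = j then 1 else 0

lemma Evec_mem_Tang (n : ℕ) (i j : Fin (n + 1)) : Evec n i j ∈ Tang n := by
  simp [Tang, Evec, Finset.sum_sub_distrib]

lemma Evec_same (n : ℕ) (i : Fin (n + 1)) : Evec n i i = 0 := by
  funext k; simp [Evec]

lemma Evec_split (n : ℕ) (i j k : Fin (n + 1)) :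
    Evec n i j = Evec n i k + Evec n k j := by
  funext m; simp only [Evec, Pi.add_apply]; ring

lemma tang_decomp {X : Fin (n + 1) → ℝ} (hX : X ∈ Tang n) :
    X = ∑ i, X i • Evec n i (Fin.last n) := by
  have hs : ∑ i, X i = 0 := hX
  funext k
  simp only [Finset.sum_apply, Pi.smul_apply, Evec, smul_eq_mul, mul_sub, mul_ite, mul_one,
    mul_zero, Finset.sum_sub_distrib]
  have h1 : ∑ i, (if k = i then X i else 0) = X k := by simp
  have h2 : ∑ i, (if k = Fin.last n then X i else 0) = 0 := by
    by_cases hk : k = Fin.last n <;> simp [hk, hs]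
  rw [h1, h2, sub_zero]

lemma bilin_ext {B' : (Fin (n + 1) → ℝ) → (Fin (n + 1) → ℝ) → ℝ}
    (hB : IsSymmBilin B) (hB' : IsSymmBilin B')
    (h : ∀ i j k l : Fin (n + 1), i ≠ j → k ≠ l →
      B (Evec n i j) (Evec n k l) = B' (Evec n i j) (Evec n k l))
    {X Y : Fin (n + 1) → ℝ} (hX : X ∈ Tang n) (hY : Y ∈ Tang n) :
    B X Y = B' X Y := by
  rw [tang_decomp hX, tang_decomp hY]
  rw [hB.sum_left, hB'.sum_left]
  refine Finset.sum_congr rfl fun i _ => ?_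
  rw [hB.smul_left, hB'.smul_left, hB.sum_right, hB'.sum_right]
  congr 1
  refine Finset.sum_congr rfl fun k _ => ?_
  rw [hB.smul_right, hB'.smul_right]
  congr 1
  by_cases hi : i = Fin.last n
  · simp [hi, Evec_same, hB.zero_left, hB'.zero_left]
  · by_cases hk : k = Fin.last n
    · simp [hk, Evec_same, hB.zero_right, hB'.zero_right]
    · exact h i _ k _ hi hk

end Aux
section AsBil

variable {n : ℕ}

/-- linear functional `X ↦ ∑ X i / p i`. -/
def Lsum (n : ℕ) (p X : Fin (n + 1) → ℝ) : ℝ := ∑ i, X i / p i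

lemma As_eq_Lsum (p X Y : Fin (n + 1) → ℝ) : As n p X Y = Lsum n p X * Lsum n p Y := rfl

lemma Lsum_linear (p : Fin (n + 1) → ℝ) (c : ℝ) (X X' : Fin (n + 1) → ℝ) :
    Lsum n p (c • X + X') = c * Lsum n p X + Lsum n p X' := by
  simp [Lsum, add_div, Finset.sum_add_distrib, Finset.mul_sum, mul_div_assoc]

lemma isSymmBilin_muAs (mu : ℝ) (p : Fin (n + 1) → ℝ) :
    IsSymmBilin (fun X Y => mu * As n p X Y) := by
  constructor
  · intro X Y; simp only [As_eq_Lsum]; ring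
  · intro c X X' Y; simp only [As_eq_Lsum, Lsum_linear]; ring

lemma Lsum_Evec (p : Fin (n + 1) → ℝ) (i j : Fin (n + 1)) :
    Lsum n p (Evec n i j) = 1 / p i - 1 / p j := by
  simp [Lsum, Evec, sub_div, Finset.sum_sub_distrib, ite_div, zero_div]

end AsBil
section P2

lemma psiPt_refl (α u : ℝ) :
    psiPt α u (Equiv.refl (Fin 3)) = ![α * u, α * (1 - u), 1 - α] := by
  funext I
  fin_cases I <;>
    simp [psiPt, sPatch, pu, Fin.sum_univ_two, Fin.last]

lemma psim2_realize {q : Fin 3 → ℝ} (hq : q ∈ Psim 2) :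
    ∃ α u : ℝ, α ∈ Set.Ioo (0:ℝ) 1 ∧ u ∈ Set.Ioo (0:ℝ) 1 ∧
      psiPt α u (Equiv.refl (Fin 3)) = q := by
  obtain ⟨hpos, hsum⟩ := hq
  have h0 := hpos 0
  have h1 := hpos 1
  have h2 := hpos 2
  have hs : q 0 + q 1 + q 2 = 1 := by
    rw [← hsum]; simp [Fin.sum_univ_three]
  have hpos' : (0:ℝ) < 1 - q 2 := by linarith [h2.2]
  refine ⟨1 - q 2, q 0 / (1 - q 2), ?_, ?_, ?_⟩
  · constructor <;> [linarith [h2.2]; linarith [h2.1]]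
  · constructor
    · exact div_pos h0.1 hpos'
    · rw [div_lt_one hpos']; linarith [h1.1]
  · rw [psiPt_refl]
    funext I
    have hne : (1:ℝ) - q 2 ≠ 0 := ne_of_gt hpos'
    fin_cases I <;> simp <;> field_simp <;> linarith

end P2
section P2B

/-- `f(t) = A_1(p_t)(Z,Z)`. -/
def ff (A1 : (Fin 2 → ℝ) → (Fin 2 → ℝ) → (Fin 2 → ℝ) → ℝ) (t : ℝ) : ℝ :=
  A1 (pu t) (Zvec 1 0) (Zvec 1 0)

/-- `θ(t) = sgn(2t-1)√(f(t))`. -/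
def th (A1 : (Fin 2 → ℝ) → (Fin 2 → ℝ) → (Fin 2 → ℝ) → ℝ) (t : ℝ) : ℝ :=
  Real.sign (2 * t - 1) * Real.sqrt (ff A1 t)

/-- `S_{ij}(q) = (2/(q_i+q_j)) θ(q_i/(q_i+q_j))`. -/
def Sqq (A1 : (Fin 2 → ℝ) → (Fin 2 → ℝ) → (Fin 2 → ℝ) → ℝ) (q : Fin 3 → ℝ)
    (i j : Fin 3) : ℝ :=
  (2 / (q i + q j)) * th A1 (q i / (q i + q j))

lemma dHvec_eq (q : Fin 3 → ℝ) (i j : Fin 3) :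
    dHvec q i j = ((q i + q j) / 2) • Evec 2 i j := by
  funext k
  simp [dHvec, Zvec, Evec]

variable {A : (n : ℕ) → (Fin (n + 1) → ℝ) → (Fin (n + 1) → ℝ) → (Fin (n + 1) → ℝ) → ℝ}

lemma A2_Evec (hsymm : SymmTF A) (hC2 : CondC2 (A 1) (A 2))
    {q : Fin 3 → ℝ} (hq : q ∈ Psim 2) (i j k l : Fin 3) (hij : i ≠ j) (hkl : k ≠ l) :
    A 2 q (Evec 2 i j) (Evec 2 k l) = Sqq (A 1) q i j * Sqq (A 1) q k l := by
  obtain ⟨α, u, hα, hu, hψ⟩ := psim2_realize hq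
  have key := hC2.2.2 α hα u hu (Equiv.refl (Fin 3)) i j k l hij hkl
  simp only [Equiv.refl_apply] at key
  unfold uRatio at key
  rw [hψ] at key
  rw [dHvec_eq, dHvec_eq] at key
  have hb := hsymm 2 (by norm_num) q hq
  rw [hb.smul_left, hb.smul_right] at key
  have hi := (hq.1 i).1
  have hj := (hq.1 j).1
  have hk := (hq.1 k).1
  have hl := (hq.1 l).1
  have h1 : q i + q j ≠ 0 := by positivity
  have h2 : q k + q l ≠ 0 := by positivity
  unfold Sqq th ff
  field_simp at key ⊢
  linarith [key]

end P2B
section P2C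

variable {A : (n : ℕ) → (Fin (n + 1) → ℝ) → (Fin (n + 1) → ℝ) → (Fin (n + 1) → ℝ) → ℝ}

lemma Evec_neg (n : ℕ) (i j : Fin (n + 1)) : Evec n j i = (-1 : ℝ) • Evec n i j := by
  funext k
  simp only [Evec, Pi.smul_apply, smul_eq_mul]
  ring

lemma Sqq_antisymm (hsymm : SymmTF A) (hC2 : CondC2 (A 1) (A 2))
    {q : Fin 3 → ℝ} (hq : q ∈ Psim 2) {i j : Fin 3} (hij : i ≠ j) :
    Sqq (A 1) q j i = - Sqq (A 1) q i j := by
  have hb := hsymm 2 (by norm_num) q hq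
  have e1 := A2_Evec hsymm hC2 hq i j i j hij hij
  have e2 := A2_Evec hsymm hC2 hq j i j i hij.symm hij.symm
  have e3 := A2_Evec hsymm hC2 hq i j j i hij hij.symm
  rw [Evec_neg 2 i j, hb.smul_left, hb.smul_right] at e2
  rw [Evec_neg 2 i j, hb.smul_right] at e3
  have hsq : (Sqq (A 1) q i j + Sqq (A 1) q j i) ^ 2 = 0 := by nlinarith [e1, e2, e3]
  have := pow_eq_zero_iff (two_ne_zero) |>.mp hsq
  linarith

lemma Sqq_cocycle (hsymm : SymmTF A) (hC2 : CondC2 (A 1) (A 2))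
    {q : Fin 3 → ℝ} (hq : q ∈ Psim 2) :
    Sqq (A 1) q 0 2 = Sqq (A 1) q 0 1 + Sqq (A 1) q 1 2 := by
  have hb := hsymm 2 (by norm_num) q hq
  have hsplit : Evec 2 0 2 = Evec 2 0 1 + Evec 2 1 2 := Evec_split 2 0 2 1
  have key : ∀ a b : Fin 3, a ≠ b →
      Sqq (A 1) q 0 2 * Sqq (A 1) q a b =
        Sqq (A 1) q 0 1 * Sqq (A 1) q a b + Sqq (A 1) q 1 2 * Sqq (A 1) q a b := by
    intro a b hab
    have h := hb.add_left (Evec 2 0 1) (Evec 2 1 2) (Evec 2 a b)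
    rw [← hsplit] at h
    rw [A2_Evec hsymm hC2 hq 0 2 a b (by decide) hab,
        A2_Evec hsymm hC2 hq 0 1 a b (by decide) hab,
        A2_Evec hsymm hC2 hq 1 2 a b (by decide) hab] at h
    exact h
  have e02 := key 0 2 (by decide)
  have e01 := key 0 1 (by decide)
  have e12 := key 1 2 (by decide)
  have hD : (Sqq (A 1) q 0 2 - Sqq (A 1) q 0 1 - Sqq (A 1) q 1 2) ^ 2 = 0 := by
    linear_combination e02 - e01 - e12
  have := pow_eq_zero_iff (two_ne_zero) |>.mp hD
  linarith

end P2C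
section P2D

variable {A : (n : ℕ) → (Fin (n + 1) → ℝ) → (Fin (n + 1) → ℝ) → (Fin (n + 1) → ℝ) → ℝ}

/-- `F(a,b) = (2/(a+b)) θ(a/(a+b))` for `a, b > 0`. -/
def FT (A1 : (Fin 2 → ℝ) → (Fin 2 → ℝ) → (Fin 2 → ℝ) → ℝ) (a b : ℝ) : ℝ :=
  (2 / (a + b)) * th A1 (a / (a + b))

lemma mem_psim3 {x y z : ℝ} (hx : 0 < x) (hy : 0 < y) (hz : 0 < z)
    (hsum : x + y + z = 1) : ![x, y, z] ∈ Psim 2 := by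
  constructor
  · intro i
    fin_cases i <;> simp [Set.mem_Ioo] <;> constructor <;> linarith
  · simp [Fin.sum_univ_three]; linarith

lemma Sqq_eq_FT (A1 : (Fin 2 → ℝ) → (Fin 2 → ℝ) → (Fin 2 → ℝ) → ℝ)
    (q : Fin 3 → ℝ) (i j : Fin 3) : Sqq A1 q i j = FT A1 (q i) (q j) := rfl

lemma FT_coc1 (hsymm : SymmTF A) (hC2 : CondC2 (A 1) (A 2)) {x y z : ℝ}
    (hx : 0 < x) (hy : 0 < y) (hz : 0 < z) (hsum : x + y + z = 1) :
    FT (A 1) x z = FT (A 1) x y + FT (A 1) y z := by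
  have h := Sqq_cocycle hsymm hC2 (mem_psim3 hx hy hz hsum)
  rw [Sqq_eq_FT, Sqq_eq_FT, Sqq_eq_FT] at h
  simpa using h

lemma FT_scale (A1 : (Fin 2 → ℝ) → (Fin 2 → ℝ) → (Fin 2 → ℝ) → ℝ) {l a b : ℝ}
    (hl : 0 < l) (hab : 0 < a + b) :
    FT A1 (l * a) (l * b) = FT A1 a b / l := by
  unfold FT
  rw [show l * a + l * b = l * (a + b) by ring, mul_div_mul_left _ _ (ne_of_gt hl),
    show (2:ℝ) / (l * (a + b)) = (2 / (a + b)) / l by rw [div_div, mul_comm]]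
  ring

lemma FT_coc (hsymm : SymmTF A) (hC2 : CondC2 (A 1) (A 2)) {a b c : ℝ}
    (ha : 0 < a) (hb : 0 < b) (hc : 0 < c) :
    FT (A 1) a c = FT (A 1) a b + FT (A 1) b c := by
  set s := a + b + c with hs
  have hs0 : 0 < s := by positivity
  have h := FT_coc1 hsymm hC2 (x := a / s) (y := b / s) (z := c / s)
    (by positivity) (by positivity) (by positivity) (by field_simp; exact hs.symm)
  rw [show a / s = (1 / s) * a by ring, show b / s = (1 / s) * b by ring,
    show c / s = (1 / s) * c by ring] at h
  rw [FT_scale _ (by positivity) (by linarith), FT_scale _ (by positivity) (by linarith),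
    FT_scale _ (by positivity) (by linarith)] at h
  have h2 : FT (A 1) a c * s = (FT (A 1) a b + FT (A 1) b c) * s := by
    field_simp at h
    rw [h]
  exact mul_right_cancel₀ (ne_of_gt hs0) h2

lemma th_antisymm (hsymm : SymmTF A) (hC2 : CondC2 (A 1) (A 2)) {t : ℝ}
    (ht0 : 0 < t) (ht1 : t < 1) :
    th (A 1) (1 - t) = - th (A 1) t := by
  have hq : ![t / 2, (1 - t) / 2, 1 / 2] ∈ Psim 2 :=
    mem_psim3 (by linarith) (by linarith) (by norm_num) (by ring)
  have h := Sqq_antisymm hsymm hC2 hq (i := 0) (j := 1) (by decide)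
  rw [Sqq_eq_FT, Sqq_eq_FT] at h
  simp only [Matrix.cons_val_zero, Matrix.cons_val_one, Matrix.head_cons] at h
  unfold FT at h
  rw [show (1 - t) / 2 + t / 2 = (1 : ℝ) / 2 by ring,
    show t / 2 + (1 - t) / 2 = (1 : ℝ) / 2 by ring,
    show ((1 - t) / 2) / ((1 : ℝ) / 2) = 1 - t by ring,
    show (t / 2) / ((1 : ℝ) / 2) = t by ring] at h
  norm_num at h
  linarith

lemma FT_antisymm (hsymm : SymmTF A) (hC2 : CondC2 (A 1) (A 2)) {a b : ℝ}
    (ha : 0 < a) (hb : 0 < b) : FT (A 1) b a = - FT (A 1) a b := by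
  have hab : 0 < a + b := by linarith
  have h1 : b / (b + a) = 1 - a / (a + b) := by
    rw [eq_sub_iff_add_eq, show b + a = a + b by ring, ← add_div, add_comm b a,
      div_self (ne_of_gt hab)]
  unfold FT
  rw [h1, show b + a = a + b by ring,
    th_antisymm hsymm hC2 (div_pos ha hab) ((div_lt_one hab).mpr (by linarith))]
  ring

lemma th_half (A1 : (Fin 2 → ℝ) → (Fin 2 → ℝ) → (Fin 2 → ℝ) → ℝ) :
    th A1 (1 / 2) = 0 := by
  unfold th
  norm_num

lemma FT_diff (hsymm : SymmTF A) (hC2 : CondC2 (A 1) (A 2)) {x y : ℝ}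
    (hx : 0 < x) (hy : 0 < y) :
    FT (A 1) x y = FT (A 1) x 1 - FT (A 1) y 1 := by
  rw [FT_coc hsymm hC2 hx one_pos hy, FT_antisymm hsymm hC2 hy one_pos]
  ring

lemma FT_one (A1 : (Fin 2 → ℝ) → (Fin 2 → ℝ) → (Fin 2 → ℝ) → ℝ) :
    FT A1 1 1 = 0 := by
  unfold FT
  norm_num [th_half]

lemma hh_hom (hsymm : SymmTF A) (hC2 : CondC2 (A 1) (A 2)) {l x : ℝ}
    (hl : 0 < l) (hx : 0 < x) :
    FT (A 1) (l * x) 1 = FT (A 1) l 1 + FT (A 1) x 1 / l := by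
  have h1 : FT (A 1) (l * x) l = FT (A 1) (l * x) 1 - FT (A 1) l 1 :=
    FT_diff hsymm hC2 (by positivity) hl
  have h2 : FT (A 1) (l * x) (l * 1) = FT (A 1) x 1 / l :=
    FT_scale _ hl (by linarith)
  rw [mul_one] at h2
  rw [h2] at h1
  linarith

lemma hh_formula (hsymm : SymmTF A) (hC2 : CondC2 (A 1) (A 2)) {x : ℝ} (hx : 0 < x) :
    FT (A 1) x 1 = (2 * FT (A 1) 2 1) * (1 - 1 / x) := by
  have h1 := hh_hom hsymm hC2 (two_pos) hx
  have h2 := hh_hom hsymm hC2 hx (two_pos (α := ℝ))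
  rw [mul_comm] at h2
  rw [h1] at h2
  have hx0 : x ≠ 0 := ne_of_gt hx
  field_simp at h2 ⊢
  linarith

lemma th_formula (hsymm : SymmTF A) (hC2 : CondC2 (A 1) (A 2)) {t : ℝ}
    (ht0 : 0 < t) (ht1 : t < 1) :
    th (A 1) t = (FT (A 1) 2 1) * (1 / (1 - t) - 1 / t) := by
  have h1t : 0 < 1 - t := by linarith
  have e : FT (A 1) t (1 - t) = 2 * th (A 1) t := by
    unfold FT
    rw [show t + (1 - t) = (1 : ℝ) by ring]
    norm_num
  have h := FT_diff hsymm hC2 ht0 h1t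
  rw [hh_formula hsymm hC2 ht0, hh_formula hsymm hC2 h1t, e] at h
  have ht0' : t ≠ 0 := ne_of_gt ht0
  have h1t' : (1 : ℝ) - t ≠ 0 := ne_of_gt h1t
  field_simp at h ⊢
  nlinarith [h]

end P2D
section P2E

variable {A : (n : ℕ) → (Fin (n + 1) → ℝ) → (Fin (n + 1) → ℝ) → (Fin (n + 1) → ℝ) → ℝ}

lemma Zvec1_eq : Zvec 1 0 = ![(1:ℝ)/2, -(1/2)] := by
  funext k
  fin_cases k <;> simp [Zvec] <;> norm_num

lemma pu_mem {t : ℝ} (ht : t ∈ Set.Ioo (0:ℝ) 1) : pu t ∈ Psim 1 := by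
  obtain ⟨h0, h1⟩ := ht
  constructor
  · intro i
    fin_cases i <;> simp [pu, Set.mem_Ioo] <;> constructor <;> linarith
  · simp [pu, Fin.sum_univ_two]

lemma Zvec1_tang : Zvec 1 0 ∈ Tang 1 := by
  simp [Tang, Zvec, Fin.sum_univ_two]
  norm_num

lemma ff_nonneg (hC2 : CondC2 (A 1) (A 2)) {t : ℝ} (ht : t ∈ Set.Ioo (0:ℝ) 1) :
    0 ≤ ff (A 1) t :=
  hC2.1 (pu t) (pu_mem ht) (Zvec 1 0) Zvec1_tang

lemma ff_half (hsymm : SymmTF A) (hC2 : CondC2 (A 1) (A 2)) : ff (A 1) (1/2) = 0 := by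
  obtain ⟨X, hXT, hX0, hdeg⟩ := hC2.2.1
  have hsum : X 0 + X 1 = 0 := by
    have h : ∑ i, X i = 0 := hXT
    rwa [Fin.sum_univ_two] at h
  have hX0' : X 0 ≠ 0 := by
    intro h
    apply hX0
    funext k
    fin_cases k
    · exact h
    · show X 1 = 0
      linarith
  have hbuni : bunif 1 ∈ Psim 1 := by
    constructor
    · intro i; simp [bunif]; norm_num
    · simp [bunif, Fin.sum_univ_two]; norm_num
  have hb := hsymm 1 (by norm_num) (bunif 1) hbuni
  have hpu : pu (1/2 : ℝ) = bunif 1 := by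
    funext k
    fin_cases k <;> simp [pu, bunif] <;> norm_num
  have hZ : Zvec 1 0 = (1 / (2 * X 0)) • X := by
    have hX1 : X 1 = - X 0 := by linarith
    funext k
    fin_cases k <;> simp [Zvec1_eq, hX1] <;> field_simp
  unfold ff
  rw [hpu, hZ, hb.smul_left, hb.smul_right, hdeg X hXT]
  ring

lemma sign_sq {x : ℝ} (hx : x ≠ 0) : Real.sign x ^ 2 = 1 := by
  rcases lt_or_gt_of_ne hx with h | h
  · rw [Real.sign_of_neg h]; norm_num
  · rw [Real.sign_of_pos h]; norm_num

lemma ff_eq_th_sq (hsymm : SymmTF A) (hC2 : CondC2 (A 1) (A 2)) {t : ℝ}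
    (ht : t ∈ Set.Ioo (0:ℝ) 1) : ff (A 1) t = th (A 1) t ^ 2 := by
  rcases eq_or_ne t (1/2) with h | h
  · rw [h, ff_half hsymm hC2, th_half]
    norm_num
  · unfold th
    rw [mul_pow, sign_sq (by intro hc; apply h; linarith),
      Real.sq_sqrt (ff_nonneg hC2 ht)]
    ring

lemma Sqq_formula (hsymm : SymmTF A) (hC2 : CondC2 (A 1) (A 2))
    {q : Fin 3 → ℝ} (hq : q ∈ Psim 2) (i j : Fin 3) :
    Sqq (A 1) q i j = (2 * FT (A 1) 2 1) * (1 / q j - 1 / q i) := by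
  have hi := (hq.1 i).1
  have hj := (hq.1 j).1
  rw [Sqq_eq_FT, FT_diff hsymm hC2 hi hj, hh_formula hsymm hC2 hi,
    hh_formula hsymm hC2 hj]
  ring

lemma A2_base (hsymm : SymmTF A) (hC2 : CondC2 (A 1) (A 2))
    {q : Fin 3 → ℝ} (hq : q ∈ Psim 2) :
    ∀ X ∈ Tang 2, ∀ Y ∈ Tang 2,
      A 2 q X Y = (2 * FT (A 1) 2 1) ^ 2 * As 2 q X Y := by
  intro X hX Y hY
  exact bilin_ext (hsymm 2 (by norm_num) q hq) (isSymmBilin_muAs _ q)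
    (fun i j k l hij hkl => by
      rw [A2_Evec hsymm hC2 hq i j k l hij hkl, Sqq_formula hsymm hC2 hq,
        Sqq_formula hsymm hC2 hq]
      show _ = _ * As 2 q _ _
      rw [As_eq_Lsum, Lsum_Evec, Lsum_Evec]
      ring) hX hY

lemma A1_base (hsymm : SymmTF A) (hC2 : CondC2 (A 1) (A 2))
    {p : Fin 2 → ℝ} (hp : p ∈ Psim 1) :
    ∀ X ∈ Tang 1, ∀ Y ∈ Tang 1,
      A 1 p X Y = (2 * FT (A 1) 2 1) ^ 2 * As 1 p X Y := by
  intro X hX Y hY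
  have hp0 := hp.1 0
  have hp1 := hp.1 1
  have hps : p 0 + p 1 = 1 := by
    have h : ∑ i, p i = 1 := hp.2
    rwa [Fin.sum_univ_two] at h
  have hXs : X 0 + X 1 = 0 := by have h : ∑ i, X i = 0 := hX; rwa [Fin.sum_univ_two] at h
  have hYs : Y 0 + Y 1 = 0 := by have h : ∑ i, Y i = 0 := hY; rwa [Fin.sum_univ_two] at h
  have hpu : pu (p 0) = p := by
    funext k
    fin_cases k <;> simp [pu] <;> linarith
  have hb := hsymm 1 (by norm_num) p hp
  have hXZ : X = (2 * X 0) • Zvec 1 0 := by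
    have hX1 : X 1 = - X 0 := by linarith
    funext k
    fin_cases k <;> simp [Zvec1_eq, hX1] <;> ring
  have hYZ : Y = (2 * Y 0) • Zvec 1 0 := by
    have hY1 : Y 1 = - Y 0 := by linarith
    funext k
    fin_cases k <;> simp [Zvec1_eq, hY1] <;> ring
  have hval : A 1 p X Y = (2 * X 0) * (2 * Y 0) * ff (A 1) (p 0) := by
    conv_lhs => rw [hXZ, hYZ]
    rw [hb.smul_left, hb.smul_right]
    unfold ff
    rw [hpu]
    ring
  have hff := ff_eq_th_sq hsymm hC2 (t := p 0) ⟨hp0.1, hp0.2⟩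
  have hth := th_formula hsymm hC2 hp0.1 hp0.2
  have h1p : 1 - p 0 = p 1 := by linarith
  rw [hval, hff, hth, As_eq_Lsum]
  have hL : ∀ W : Fin 2 → ℝ, Lsum 1 p W = W 0 / p 0 + W 1 / p 1 := by
    intro W
    rw [Lsum, Fin.sum_univ_two]
  rw [hL, hL, h1p]
  have hp0' : p 0 ≠ 0 := ne_of_gt hp0.1
  have hp1' : p 1 ≠ 0 := ne_of_gt hp1.1
  have hX1 : X 1 = - X 0 := by linarith
  have hY1 : Y 1 = - Y 0 := by linarith
  rw [hX1, hY1]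
  field_simp
  ring

end P2E
section Step

variable {A : (n : ℕ) → (Fin (n + 1) → ℝ) → (Fin (n + 1) → ℝ) → (Fin (n + 1) → ℝ) → ℝ}

lemma sum_castSucc_perm {n : ℕ} (σ : Equiv.Perm (Fin (n + 2))) (g : Fin (n + 2) → ℝ) :
    ∑ m : Fin (n + 1), g (σ m.castSucc) = (∑ J, g J) - g (σ (Fin.last (n + 1))) := by
  have h : ∑ J : Fin (n + 2), g (σ J) = ∑ J : Fin (n + 2), g J := Equiv.sum_comp σ g
  rw [Fin.sum_univ_castSucc (f := fun J => g (σ J))] at h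
  linarith

lemma castSucc_ne_perm_last {n : ℕ} (σ : Equiv.Perm (Fin (n + 2))) (m : Fin (n + 1)) :
    σ m.castSucc ≠ σ (Fin.last (n + 1)) := by
  exact fun h => (Fin.castSucc_lt_last m).ne (σ.injective h)

lemma sum_ind_eq {n : ℕ} (σ : Equiv.Perm (Fin (n + 2))) (g : Fin (n + 1) → ℝ)
    (m₀ : Fin (n + 1)) :
    ∑ m, g m * (if σ m.castSucc = σ m₀.castSucc then (1:ℝ) else 0) = g m₀ := by
  have h : ∀ m : Fin (n + 1),
      (if σ m.castSucc = σ m₀.castSucc then (1:ℝ) else 0) = if m = m₀ then 1 else 0 := by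
    intro m
    simp [EmbeddingLike.apply_eq_iff_eq, Fin.castSucc_inj]
  simp only [h, mul_ite, mul_one, mul_zero]
  rw [Finset.sum_ite_eq']
  simp

lemma sum_ind_last {n : ℕ} (σ : Equiv.Perm (Fin (n + 2))) (g : Fin (n + 1) → ℝ) :
    ∑ m, g m * (if σ m.castSucc = σ (Fin.last (n + 1)) then (1:ℝ) else 0) = 0 := by
  apply Finset.sum_eq_zero
  intro m _
  rw [if_neg (castSucc_ne_perm_last σ m), mul_zero]

lemma sum_Evec_mul {n : ℕ} (c : Fin (n + 1) → ℝ) (mi mj : Fin (n + 1)) :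
    ∑ m, Evec n mi mj m * c m = c mi - c mj := by
  simp [Evec, sub_mul, Finset.sum_sub_distrib, ite_mul, one_mul, zero_mul]

lemma smul_mem_Tang {n : ℕ} {X : Fin (n + 1) → ℝ} (c : ℝ) (hX : X ∈ Tang n) :
    c • X ∈ Tang n := by
  have h : ∑ i, X i = 0 := hX
  show ∑ i, (c • X) i = 0
  simp only [Pi.smul_apply, smul_eq_mul]
  rw [← Finset.mul_sum, h, mul_zero]

lemma Lsum_smul {n : ℕ} (p : Fin (n + 1) → ℝ) (c : ℝ) (X : Fin (n + 1) → ℝ) :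
    Lsum n p (c • X) = c * Lsum n p X := by
  simp [Lsum, Finset.mul_sum, mul_div_assoc]

lemma step_missing (hinv : InvariantSP A) {n : ℕ} (hn : 0 < n) (mu : ℝ)
    (IH : ∀ p ∈ Psim n, ∀ X ∈ Tang n, ∀ Y ∈ Tang n, A n p X Y = mu * As n p X Y)
    {q : Fin (n + 2) → ℝ} (hq : q ∈ Psim (n + 1)) {i j k l I : Fin (n + 2)}
    (hij : i ≠ j) (hkl : k ≠ l) (hIi : I ≠ i) (hIj : I ≠ j) (hIk : I ≠ k) (hIl : I ≠ l) :
    A (n + 1) q (Evec (n + 1) i j) (Evec (n + 1) k l) =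
      mu * As (n + 1) q (Evec (n + 1) i j) (Evec (n + 1) k l) := by
  classical
  set σ : Equiv.Perm (Fin (n + 2)) := Equiv.swap I (Fin.last (n + 1)) with hσdef
  have hσlast : σ (Fin.last (n + 1)) = I := Equiv.swap_apply_right _ _
  have hqpos : ∀ J, 0 < q J := fun J => (hq.1 J).1
  have hqsum : ∑ J, q J = 1 := hq.2
  set α : ℝ := 1 - q I with hαdef
  have hα0 : 0 < α := by
    have := (hq.1 I).2
    rw [hαdef]; linarith
  have hα1 : α < 1 := by
    have := hqpos I
    rw [hαdef]; linarith
  have hαne : α ≠ 0 := ne_of_gt hα0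
  have hlt : ∀ J, J ≠ I → q J < α := by
    intro J hJ
    have hsub : ({J, I} : Finset (Fin (n + 2))) ⊆ Finset.univ := Finset.subset_univ _
    have hdisj := Finset.sum_sdiff (f := q) hsub
    have hpair : ∑ m ∈ ({J, I} : Finset (Fin (n + 2))), q m = q J + q I :=
      Finset.sum_pair hJ
    have hcard : (Finset.univ \ ({J, I} : Finset (Fin (n + 2)))).card = n := by
      rw [Finset.card_sdiff_of_subset hsub, Finset.card_univ, Fintype.card_fin, Finset.card_pair hJ]
      omega
    have hne : (Finset.univ \ ({J, I} : Finset (Fin (n + 2)))).Nonempty := by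
      rw [← Finset.card_pos, hcard]; exact hn
    have hpos : 0 < ∑ m ∈ Finset.univ \ ({J, I} : Finset (Fin (n + 2))), q m :=
      Finset.sum_pos (fun m _ => hqpos m) hne
    rw [hpair, hqsum] at hdisj
    rw [hαdef]
    linarith
  set p : Fin (n + 1) → ℝ := fun m => q (σ m.castSucc) / α with hpdef
  have hpmem : p ∈ Psim n := by
    constructor
    · intro m
      have hne : σ m.castSucc ≠ I := by
        rw [← hσlast]; exact castSucc_ne_perm_last σ m
      exact ⟨div_pos (hqpos _) hα0, by rw [div_lt_one hα0]; exact hlt _ hne⟩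
    · show ∑ m : Fin (n + 1), q (σ m.castSucc) / α = 1
      rw [← Finset.sum_div, sum_castSucc_perm σ q, hσlast, hqsum, ← hαdef]
      exact div_self hαne
  have hGp : sPatch n α σ p = q := by
    funext J
    show α * (∑ m, p m * (if σ m.castSucc = J then 1 else 0)) +
      (1 - α) * (if σ (Fin.last (n + 1)) = J then 1 else 0) = q J
    by_cases hJ : J = I
    · rw [hJ]
      have h0 : ∑ m, p m * (if σ m.castSucc = I then (1:ℝ) else 0) = 0 := by
        rw [← hσlast]; exact sum_ind_last σ p
      rw [h0, if_pos hσlast, hαdef]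
      ring
    · have hpre : σ⁻¹ J ≠ Fin.last (n + 1) := by
        intro hc
        apply hJ
        rw [← hσlast, ← hc]
        exact (Equiv.apply_symm_apply σ J).symm
      have hm : σ ((σ⁻¹ J).castPred hpre).castSucc = J := by
        rw [Fin.castSucc_castPred]
        exact Equiv.apply_symm_apply σ J
      have h1 : ∑ m, p m * (if σ m.castSucc = J then (1:ℝ) else 0) =
          p ((σ⁻¹ J).castPred hpre) := by
        conv_lhs => rw [← hm]
        exact sum_ind_eq σ p _
      have hne2 : σ (Fin.last (n + 1)) ≠ J := by
        rw [hσlast]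
        exact fun hc => hJ hc.symm
      rw [h1, if_neg hne2]
      have hpv : p ((σ⁻¹ J).castPred hpre) = q J / α := by
        show q (σ ((σ⁻¹ J).castPred hpre).castSucc) / α = q J / α
        rw [hm]
      rw [hpv]
      field_simp
      ring
  have hex : ∀ a : Fin (n + 2), a ≠ I → ∃ m : Fin (n + 1), σ m.castSucc = a := by
    intro a ha
    have hpre : σ⁻¹ a ≠ Fin.last (n + 1) := by
      intro hc
      apply ha
      rw [← hσlast, ← hc]
      exact (Equiv.apply_symm_apply σ a).symm
    exact ⟨(σ⁻¹ a).castPred hpre, by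
      rw [Fin.castSucc_castPred]
      exact Equiv.apply_symm_apply σ a⟩
  obtain ⟨mi, hmi⟩ := hex i hIi.symm
  obtain ⟨mj, hmj⟩ := hex j hIj.symm
  obtain ⟨mk, hmk⟩ := hex k hIk.symm
  obtain ⟨ml, hml⟩ := hex l hIl.symm
  have hdX : ∀ a b : Fin (n + 2), ∀ ma mb : Fin (n + 1), σ ma.castSucc = a →
      σ mb.castSucc = b → a ≠ I → b ≠ I →
      sPatchD n α σ ((1 / α) • Evec n ma mb) = Evec (n + 1) a b := by
    intro a b ma mb hma hmb haI hbI
    funext J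
    show α * (∑ m, ((1 / α) • Evec n ma mb) m * (if σ m.castSucc = J then 1 else 0)) =
      Evec (n + 1) a b J
    have h1 : ∀ m : Fin (n + 1), ((1 / α) • Evec n ma mb) m *
        (if σ m.castSucc = J then (1:ℝ) else 0) =
        (1 / α) * (Evec n ma mb m * (if σ m.castSucc = J then (1:ℝ) else 0)) := by
      intro m
      simp [mul_assoc]
    simp only [h1]
    rw [← Finset.mul_sum, sum_Evec_mul (fun m => if σ m.castSucc = J then (1:ℝ) else 0),
      hma, hmb]
    have h2 : (if a = J then (1:ℝ) else 0) - (if b = J then 1 else 0) = Evec (n + 1) a b J := by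
      simp [Evec, eq_comm]
    rw [h2]
    field_simp
  have hX'T : (1 / α) • Evec n mi mj ∈ Tang n := smul_mem_Tang _ (Evec_mem_Tang n mi mj)
  have hY'T : (1 / α) • Evec n mk ml ∈ Tang n := smul_mem_Tang _ (Evec_mem_Tang n mk ml)
  have happ := hinv n hn α ⟨hα0, hα1⟩ σ p hpmem _ hX'T _ hY'T
  rw [hGp, hdX i j mi mj hmi hmj hIi.symm hIj.symm,
    hdX k l mk ml hmk hml hIk.symm hIl.symm] at happ
  rw [happ, IH p hpmem _ hX'T _ hY'T]
  have hLp : ∀ a : Fin (n + 2), ∀ ma mb : Fin (n + 1), σ ma.castSucc = a → ∀ b : Fin (n + 2),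
      σ mb.castSucc = b → Lsum n p ((1 / α) • Evec n ma mb) = 1 / q a - 1 / q b := by
    intro a ma mb hma b hmb
    rw [Lsum_smul, Lsum_Evec]
    have hpa : p ma = q a / α := by show q (σ ma.castSucc) / α = _; rw [hma]
    have hpb : p mb = q b / α := by show q (σ mb.castSucc) / α = _; rw [hmb]
    rw [hpa, hpb, one_div_div, one_div_div]
    field_simp
  rw [As_eq_Lsum, As_eq_Lsum, Lsum_Evec, Lsum_Evec,
    hLp i mi mj hmi j hmj, hLp k mk ml hmk l hml]

end Step

section Final

lemma Lsum_add {n : ℕ} (p Y Y' : Fin (n + 1) → ℝ) :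
    Lsum n p (Y + Y') = Lsum n p Y + Lsum n p Y' := by
  simp [Lsum, add_div, Finset.sum_add_distrib]

lemma muAs_add_right {n : ℕ} (mu : ℝ) (p X Y Y' : Fin (n + 1) → ℝ) :
    mu * As n p X (Y + Y') = mu * As n p X Y + mu * As n p X Y' := by
  simp only [As_eq_Lsum, Lsum_add]
  ring

lemma exists_avoid3 {n : ℕ} (hn : 2 ≤ n) (a b c : Fin (n + 2)) :
    ∃ I : Fin (n + 2), I ≠ a ∧ I ≠ b ∧ I ≠ c := by
  by_contra h
  push_neg at h
  have hsub : (Finset.univ : Finset (Fin (n + 2))) ⊆ {a, b, c} := by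
    intro I _
    by_cases h1 : I = a
    · simp [h1]
    · by_cases h2 : I = b
      · simp [h2]
      · simp [h I h1 h2]
  have h1 := Finset.card_le_card hsub
  rw [Finset.card_univ, Fintype.card_fin] at h1
  have h2 : ({a, b, c} : Finset (Fin (n + 2))).card ≤ 3 := by
    apply le_trans (Finset.card_insert_le _ _)
    apply Nat.succ_le_succ
    apply le_trans (Finset.card_insert_le _ _)
    exact Nat.succ_le_succ (Finset.card_singleton c).le
  omega

end Final

/-- **Main theorem, part 2.** If `{A_n}` is a family of symmetric
`(0,2)`-tensor fields invariant under scalar patched Markov embeddings and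
`A_1`, `A_2` satisfy condition (C2), then there is `μ ≥ 0`, independent of `n`,
with `A_n = μ A_n^s` for all `n`. -/
theorem main_part2
    (A : (n : ℕ) → (Fin (n + 1) → ℝ) → (Fin (n + 1) → ℝ) → (Fin (n + 1) → ℝ) → ℝ)
    (hsymm : SymmTF A) (hinv : InvariantSP A) (hC2 : CondC2 (A 1) (A 2)) :
    ∃ mu : ℝ, 0 ≤ mu ∧ ∀ n : ℕ, 0 < n → ∀ p ∈ Psim n, ∀ X ∈ Tang n, ∀ Y ∈ Tang n,
      A n p X Y = mu * As n p X Y := by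
  refine ⟨(2 * FT (A 1) 2 1) ^ 2, sq_nonneg _, ?_⟩
  have key : ∀ n : ℕ, 2 ≤ n → ∀ p ∈ Psim n, ∀ X ∈ Tang n, ∀ Y ∈ Tang n,
      A n p X Y = (2 * FT (A 1) 2 1) ^ 2 * As n p X Y := by
    intro n hn
    induction n, hn using Nat.le_induction with
    | base =>
        intro p hp X hX Y hY
        exact A2_base hsymm hC2 hp X hX Y hY
    | succ n hn IH =>
        intro q hq X hX Y hY
        have hb := hsymm (n + 1) (by omega) q hq
        refine bilin_ext hb (isSymmBilin_muAs _ q) ?_ hX hY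
        intro i j k l hij hkl
        have hn1 : 0 < n := by omega
        by_cases hik : i = k
        · obtain ⟨I, hIi, hIj, hIl⟩ := exists_avoid3 hn i j l
          exact step_missing hinv hn1 _ IH hq hij hkl hIi hIj (hik ▸ hIi) hIl
        · by_cases hil : i = l
          · obtain ⟨I, hIi, hIj, hIk⟩ := exists_avoid3 hn i j k
            exact step_missing hinv hn1 _ IH hq hij hkl hIi hIj hIk (hil ▸ hIi)
          · obtain ⟨I1, h1i, h1j, h1k⟩ := exists_avoid3 hn i j k
            obtain ⟨I2, h2i, h2j, h2l⟩ := exists_avoid3 hn i j l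
            have hki : k ≠ i := fun h => hik h.symm
            have e1 := step_missing hinv hn1 ((2 * FT (A 1) 2 1) ^ 2) IH hq hij hki
              h1i h1j h1k h1i
            have e2 := step_missing hinv hn1 ((2 * FT (A 1) 2 1) ^ 2) IH hq hij hil
              h2i h2j h2i h2l
            rw [Evec_split (n + 1) k l i, hb.add_right, e1, e2]
            exact (muAs_add_right _ q _ _ _).symm
  intro n hn p hp X hX Y hY
  rcases eq_or_ne n 1 with h1 | h1
  · subst h1
    exact A1_base hsymm hC2 hp X hX Y hY
  · exact key n (by omega) p hp X hX Y hY
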